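/- Let H, Q, K be finite types (hosts, queues/VNFs, service classes), let A : H → Q → Prop be a placement such that every queue q is placed at exactly one host (for each q there is a unique h with A(h,q)), and let γ : K → Q → ℝ give the expected visit counts. Define a directed graph G on the vertex type V = H ⊕ Q ⊕ K with edges: from queue q to host h and from host h to queue q whenever A(h,q); from class k to queue q whenever γ_k(q) > 0; and from queue q to class k whenever γ_k(q) > 0 and γ_j(q) = 0 for every class j ≠ k. Let crit : K → Prop and strained : H → Prop be predicates satisfying: (a) some class is critical; (b) if class k is critical, γ_k(q) > 0, and A(h,q), then host h is strained; (c) if host h is strained and A(h,q), then there exists a class k with crit k and γ_k(q) > 0. If G is strongly connected (every vertex reachable from every vertex via the reflexive–transitive closure of the edge relation), then every class in K is critical and every host in H is strained. -/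
import Mathlib


/-- The host–queue–class graph of the paper: vertices are hosts `H`, queues `Q`,
and classes `K`; edges link a queue and its host in both directions, a class to
every queue it uses, and a queue to a class when that class is the only one using it. -/
def hqkEdge {H Q K : Type*} (A : H → Q → Prop) (γ : K → Q → ℝ) :
    (H ⊕ Q ⊕ K) → (H ⊕ Q ⊕ K) → Prop
  | Sum.inl h, Sum.inr (Sum.inl q) => A h q
  | Sum.inr (Sum.inl q), Sum.inl h => A h q
  | Sum.inr (Sum.inr k), Sum.inr (Sum.inl q) => 0 < γ k q
  | Sum.inr (Sum.inl q), Sum.inr (Sum.inr k) => 0 < γ k q ∧ ∀ j, j ≠ k → γ j q = 0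
  | _, _ => False

/-- If the host–queue–class graph is strongly connected, then all classes are
critical and all hosts are strained. -/
theorem stmt_5 {H Q K : Type*} [Fintype H] [Fintype Q] [Fintype K]
    (A : H → Q → Prop) (hA : ∀ q : Q, ∃! h : H, A h q)
    (γ : K → Q → ℝ)
    (crit : K → Prop) (strained : H → Prop)
    (ha : ∃ k, crit k)
    (hb : ∀ k q h, crit k → 0 < γ k q → A h q → strained h)
    (hc : ∀ h q, strained h → A h q → ∃ k, crit k ∧ 0 < γ k q)
    (hconn : ∀ u v : H ⊕ Q ⊕ K, Relation.ReflTransGen (hqkEdge A γ) u v) :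
    (∀ k, crit k) ∧ (∀ h, strained h) := by
  obtain ⟨k₀, hk₀⟩ := ha
  set P : H ⊕ Q ⊕ K → Prop := fun v =>
    match v with
    | Sum.inl h => strained h
    | Sum.inr (Sum.inl q) => ∃ k, crit k ∧ 0 < γ k q
    | Sum.inr (Sum.inr k) => crit k
    with hP
  have step : ∀ a b, hqkEdge A γ a b → P a → P b := by
    rintro (h | q | k) (h' | q' | k') e pa
    all_goals simp only [hqkEdge] at e
    all_goals try exact e.elim
    · exact hc h q' pa e
    · obtain ⟨k, hk, hγ⟩ := pa
      exact hb k q h' hk hγ e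
    · obtain ⟨k, hk, hγ⟩ := pa
      obtain ⟨e1, e2⟩ := e
      rcases eq_or_ne k k' with rfl | hne
      · exact hk
      · exact absurd (e2 k hne) hγ.ne'
    · exact ⟨k, pa, e⟩
  have key : ∀ v, P v := by
    intro v
    have := hconn (Sum.inr (Sum.inr k₀)) v
    induction this with
    | refl => exact hk₀
    | tail _ e ih => exact step _ _ e ih
  exact ⟨fun k => key (Sum.inr (Sum.inr k)), fun h => key (Sum.inl h)⟩
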